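/- Let d ≥ 1 and let q : ℝ × ℝ^d × ℝ → ℝ be defined by q(D, m, E) = E − √(D² + |m|²). Let ū, u ∈ ℝ × ℝ^d × ℝ with q(ū) > 0 and q(u) < 0. Then for every θ ∈ [0, q(ū)/(q(ū) − q(u))], one has q((1−θ)·ū + θ·u) ≥ 0. -/
import Mathlib

private lemma sqrt_concave {E : Type*} [NormedAddCommGroup E] [NormedSpace ℝ E]
    (a b θ : ℝ) (m n : E) (h0 : 0 ≤ θ) (h1 : θ ≤ 1) :
    Real.sqrt (((1 - θ) * a + θ * b) ^ 2 + ‖(1 - θ) • m + θ • n‖ ^ 2)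
      ≤ (1 - θ) * Real.sqrt (a ^ 2 + ‖m‖ ^ 2) + θ * Real.sqrt (b ^ 2 + ‖n‖ ^ 2) := by
  set x : WithLp 2 (ℝ × E) := (WithLp.equiv 2 (ℝ × E)).symm (a, m)
  set y : WithLp 2 (ℝ × E) := (WithLp.equiv 2 (ℝ × E)).symm (b, n)
  have key : ‖(1 - θ) • x + θ • y‖ ≤ (1 - θ) * ‖x‖ + θ * ‖y‖ := by
    calc ‖(1 - θ) • x + θ • y‖ ≤ ‖(1 - θ) • x‖ + ‖θ • y‖ := norm_add_le _ _
    _ = (1 - θ) * ‖x‖ + θ * ‖y‖ := by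
        rw [norm_smul, norm_smul, Real.norm_eq_abs, Real.norm_eq_abs,
          abs_of_nonneg (by linarith), abs_of_nonneg h0]
  have hx : ‖x‖ = Real.sqrt (a ^ 2 + ‖m‖ ^ 2) := by
    rw [WithLp.prod_norm_eq_of_L2]
    simp [x, Real.norm_eq_abs, sq_abs]
  have hy : ‖y‖ = Real.sqrt (b ^ 2 + ‖n‖ ^ 2) := by
    rw [WithLp.prod_norm_eq_of_L2]
    simp [y, Real.norm_eq_abs, sq_abs]
  have hz : ‖(1 - θ) • x + θ • y‖
      = Real.sqrt (((1 - θ) * a + θ * b) ^ 2 + ‖(1 - θ) • m + θ • n‖ ^ 2) := by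
    rw [WithLp.prod_norm_eq_of_L2]
    have h1 : ((1 - θ) • x + θ • y).fst = (1 - θ) * a + θ * b := rfl
    have h2 : ((1 - θ) • x + θ • y).snd = (1 - θ) • m + θ • n := rfl
    rw [h1, h2]
    simp [Real.norm_eq_abs, sq_abs]
  rw [hx, hy, hz] at key
  exact key

/-- Scaling-limiter principle: if the mean state `ū` satisfies `q(ū) > 0` and
a point value `u` satisfies `q(u) < 0`, then for any
`θ ∈ [0, q(ū)/(q(ū) - q(u))]` the convex combination `(1-θ) ū + θ u`
satisfies `q ≥ 0`, where `q(D, m, E) = E - √(D² + |m|²)`. -/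
theorem scaling_limiter (d : ℕ) (hd : 1 ≤ d)
    (q : ℝ × EuclideanSpace ℝ (Fin d) × ℝ → ℝ)
    (hq : ∀ x : ℝ × EuclideanSpace ℝ (Fin d) × ℝ,
      q x = x.2.2 - Real.sqrt (x.1 ^ 2 + ‖x.2.1‖ ^ 2))
    (ubar u : ℝ × EuclideanSpace ℝ (Fin d) × ℝ)
    (hubar : 0 < q ubar) (hu : q u < 0)
    (θ : ℝ) (hθ : θ ∈ Set.Icc (0 : ℝ) (q ubar / (q ubar - q u))) :
    0 ≤ q ((1 - θ) • ubar + θ • u) := by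
  obtain ⟨h0, h2⟩ := hθ
  have hd1 : 0 < q ubar - q u := by linarith
  have h1 : θ ≤ 1 := by
    have : q ubar / (q ubar - q u) ≤ 1 := by
      rw [div_le_one hd1]; linarith
    linarith
  have hθd : θ * (q ubar - q u) ≤ q ubar := by
    have := (div_le_iff₀ hd1).mp (le_refl (q ubar / (q ubar - q u)))
    nlinarith [(le_div_iff₀ hd1).mp h2]
  have hcc := sqrt_concave ubar.1 u.1 θ ubar.2.1 u.2.1 h0 h1
  have hfst : ((1 - θ) • ubar + θ • u).1 = (1 - θ) * ubar.1 + θ * u.1 := rfl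
  have hsnd1 : ((1 - θ) • ubar + θ • u).2.1 = (1 - θ) • ubar.2.1 + θ • u.2.1 := rfl
  have hsnd2 : ((1 - θ) • ubar + θ • u).2.2 = (1 - θ) * ubar.2.2 + θ * u.2.2 := rfl
  rw [hq, hfst, hsnd1, hsnd2]
  have hqu := hq ubar
  have hqu2 := hq u
  nlinarith [hcc]
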